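/- Let d be a metric on X, w ∈ X, M = max_x d(x,w), and define c_w(x,y) = 2M - d(x,w) - d(y,w) for distinct x,y. If d_U is an ultrametric on X with max(β_x, β_y) ≤ d_U(x,y) ≤ 2M for β_x = 2(M - d(x,w)), then d_T := d_U - c_w is a tree metric (satisfies the four point condition with δ = 0) with d_T(x,w) = d(x,w) for all x ∈ X. -/
import Mathlib

/-- An ultrametric satisfies the four point condition. -/
lemma ultra_four_pt' {X : Type*} (dU : X → X → ℝ)
    (hsym : ∀ x y, dU x y = dU y x)
    (hult : ∀ x y z, dU x y ≤ max (dU x z) (dU z y)) (x y z t : X) :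
    dU x y + dU z t ≤ max (dU x z + dU y t) (dU x t + dU y z) := by
  have h1 := hult x y z
  have h2 := hult x y t
  have h3 := hult z t x
  have h4 := hult z t y
  rw [hsym z y] at h1
  rw [hsym t y] at h2
  rw [hsym z x] at h3
  rw [hsym z y] at h4
  rcases le_max_iff.mp h1 with h1|h1 <;>
  rcases le_max_iff.mp h2 with h2|h2 <;>
  rcases le_max_iff.mp h3 with h3|h3 <;>
  rcases le_max_iff.mp h4 with h4|h4 <;>
  rcases le_total (dU y z) (dU x z) with o1|o1 <;>
  rcases le_total (dU y t) (dU x t) with o2|o2 <;>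
  rcases le_total (dU x t) (dU x z) with o3|o3 <;>
  rcases le_total (dU y t) (dU y z) with o4|o4 <;>
  rw [le_max_iff] <;>
  first | (left; linarith) | (right; linarith)

/-- If `d_U` is an ultrametric with `max(β_x,β_y) ≤ d_U(x,y) ≤ 2M`, then
`d_T := d_U - c_w` is a tree metric (0-hyperbolic metric) with `d_T(x,w) = d(x,w)`. -/
theorem sub_cw_is_tree_metric {X : Type*} [MetricSpace X] [DecidableEq X] (w : X) (M : ℝ)
    (hM : IsGreatest (Set.range fun x : X => dist x w) M)
    (dU : X → X → ℝ)
    (hsym : ∀ x y, dU x y = dU y x) (hdiag : ∀ x, dU x x = 0)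
    (hnn : ∀ x y, 0 ≤ dU x y)
    (hult : ∀ x y z, dU x y ≤ max (dU x z) (dU z y))
    (hlow : ∀ x y, x ≠ y →
      max (2 * (M - dist x w)) (2 * (M - dist y w)) ≤ dU x y)
    (hup : ∀ x y, x ≠ y → dU x y ≤ 2 * M) :
    let dT : X → X → ℝ := fun x y =>
      if x = y then 0 else dU x y - (2 * M - dist x w - dist y w)
    (∀ x y, 0 ≤ dT x y) ∧ (∀ x y, dT x y = dT y x) ∧
    (∀ x y z, dT x z ≤ dT x y + dT y z) ∧
    (∀ x y z t, dT x y + dT z t ≤ max (dT x z + dT y t) (dT x t + dT y z)) ∧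
    (∀ x, dT x w = dist x w) := by
  intro dT
  have hdT : ∀ x y : X, dT x y =
      if x = y then 0 else dU x y - (2 * M - dist x w - dist y w) := fun _ _ => rfl
  have hMx : ∀ x : X, dist x w ≤ M := fun x => hM.2 ⟨x, rfl⟩
  -- off-diagonal nonnegativity of the raw formula
  have hg : ∀ x y : X, x ≠ y → 0 ≤ dU x y - (2 * M - dist x w - dist y w) := by
    intro x y h
    have h1 := hlow x y h
    have h2 : 2 * (M - dist x w) ≤ dU x y := le_trans (le_max_left _ _) h1
    have h3 : 2 * (M - dist y w) ≤ dU x y := le_trans (le_max_right _ _) h1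
    linarith
  have hnnT : ∀ x y, 0 ≤ dT x y := by
    intro x y
    rw [hdT]
    by_cases h : x = y
    · simp [h]
    · simpa [h] using hg x y h
  -- the raw formula is always ≤ dT
  have hge : ∀ x y : X, dU x y - (2 * M - dist x w - dist y w) ≤ dT x y := by
    intro x y
    rw [hdT]
    by_cases h : x = y
    · subst h
      rw [if_pos rfl, hdiag x]
      have := hMx x
      linarith
    · rw [if_neg h]
  have hsymT : ∀ x y, dT x y = dT y x := by
    intro x y
    rw [hdT, hdT]
    by_cases h : x = y
    · simp [h]
    · rw [if_neg h, if_neg (Ne.symm h), hsym x y]; ring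
  have htri : ∀ x y z, dT x z ≤ dT x y + dT y z := by
    intro x y z
    by_cases hxz : x = z
    · subst hxz
      rw [hdT, if_pos rfl]
      exact add_nonneg (hnnT x y) (hnnT y x)
    by_cases hxy : x = y
    · subst hxy
      rw [hdT x x, if_pos rfl, zero_add]
    by_cases hyz : y = z
    · subst hyz
      rw [hdT y y, if_pos rfl, add_zero]
    · rw [hdT, hdT, hdT, if_neg hxz, if_neg hxy, if_neg hyz]
      have h1 := hult x z y
      have h2 : 2 * (M - dist y w) ≤ dU x y :=
        le_trans (le_max_right _ _) (hlow x y hxy)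
      have h3 : 2 * (M - dist y w) ≤ dU y z :=
        le_trans (le_max_left _ _) (hlow y z hyz)
      rcases le_max_iff.mp h1 with h|h <;> linarith
  refine ⟨hnnT, hsymT, htri, ?_, ?_⟩
  · intro x y z t
    by_cases hxy : x = y
    · subst hxy
      rw [hdT x x, if_pos rfl, zero_add]
      have : dT z t ≤ dT x z + dT x t := by
        calc dT z t ≤ dT z x + dT x t := htri z x t
        _ = dT x z + dT x t := by rw [hsymT z x]
      exact le_trans this (le_max_left _ _)
    by_cases hzt : z = t
    · subst hzt
      rw [hdT z z, if_pos rfl, add_zero]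
      have : dT x y ≤ dT x z + dT y z := by
        calc dT x y ≤ dT x z + dT z y := htri x z y
        _ = dT x z + dT y z := by rw [hsymT z y]
      exact le_trans this (le_max_left _ _)
    · rw [hdT x y, hdT z t, if_neg hxy, if_neg hzt]
      have key := ultra_four_pt' dU hsym hult x y z t
      have e1 := hge x z
      have e2 := hge y t
      have e3 := hge x t
      have e4 := hge y z
      rcases le_max_iff.mp key with h|h
      · exact le_trans (by linarith) (le_max_left (dT x z + dT y t) (dT x t + dT y z))
      · exact le_trans (by linarith) (le_max_right (dT x z + dT y t) (dT x t + dT y z))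
  · intro x
    by_cases h : x = w
    · subst h
      rw [hdT, if_pos rfl, dist_self]
    · rw [hdT, if_neg h]
      have h1 : 2 * M ≤ dU x w := by
        have := le_trans (le_max_right _ _) (hlow x w h)
        rw [dist_self] at this
        linarith
      have h2 := hup x w h
      rw [dist_self]
      linarith
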